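/- arXiv:2401.15121 — 3 statements merged into one kernel-verified Lean document; each statement's English description precedes it below -/
import Mathlib

section
/- Sterbenz's lemma: Let x and y be floating-point numbers in F_p (binary floating-point numbers with (p+1)-bit significand and unbounded exponent, together with 0). If 0 ≤ y/2 ≤ x ≤ y, then the real differences x − y and y − x are themselves elements of F_p (so floating-point subtraction of x and y is exact). -/
/-- `F_p`: binary floating-point numbers with `(p+1)`-bit significand and
unbounded exponent, together with `0`: reals of the form `±m·2^e` with
`2^p ≤ m < 2^(p+1)`, `e : ℤ`. -/
def Fp (p : ℕ) : Set ℝ :=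
  {x | x = 0 ∨ ∃ (s : ℤ) (m : ℕ) (e : ℤ), (s = 1 ∨ s = -1) ∧
    2 ^ p ≤ m ∧ m < 2 ^ (p + 1) ∧ x = (s : ℝ) * m * (2 : ℝ) ^ e}

/-- `z` has an even last significand bit (or is zero). -/
def EvenSigFp (p : ℕ) (z : ℝ) : Prop :=
  z = 0 ∨ ∃ (s : ℤ) (m : ℕ) (e : ℤ), (s = 1 ∨ s = -1) ∧
    2 ^ p ≤ m ∧ m < 2 ^ (p + 1) ∧ m % 2 = 0 ∧ z = (s : ℝ) * m * (2 : ℝ) ^ e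

/-- `z` is the round-to-nearest (ties to even) value of `r` in `F_p`. -/
def RoundsTo (p : ℕ) (r z : ℝ) : Prop :=
  z ∈ Fp p ∧ (∀ w ∈ Fp p, |r - z| ≤ |r - w|) ∧
    ((∃ w ∈ Fp p, w ≠ z ∧ |r - w| = |r - z|) → EvenSigFp p z)

lemma nat_mem_Fp (p : ℕ) (k : ℕ) (e : ℤ) (hk : 1 ≤ k) (hk2 : k < 2 ^ (p + 1)) :
    (k : ℝ) * (2 : ℝ) ^ e ∈ Fp p := by
  set L := Nat.log 2 k with hL
  have hk0 : k ≠ 0 := by omega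
  have h1 : 2 ^ L ≤ k := Nat.pow_log_le_self 2 hk0
  have h2 : k < 2 ^ (L + 1) := Nat.lt_pow_succ_log_self (by norm_num) k
  have hLp : L ≤ p := by
    by_contra h
    have : 2 ^ (p + 1) ≤ 2 ^ L := Nat.pow_le_pow_right (by norm_num) (by omega)
    exact absurd hk2 (not_lt.mpr (this.trans h1))
  refine Or.inr ⟨1, k * 2 ^ (p - L), e - (p - L : ℕ), Or.inl rfl, ?_, ?_, ?_⟩
  · calc 2 ^ p = 2 ^ L * 2 ^ (p - L) := by rw [← pow_add]; congr 1; omega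
    _ ≤ k * 2 ^ (p - L) := Nat.mul_le_mul_right _ h1
  · have hp : 0 < 2 ^ (p - L) := Nat.pow_pos (by norm_num)
    calc k * 2 ^ (p - L) < 2 ^ (L + 1) * 2 ^ (p - L) := mul_lt_mul_of_pos_right h2 hp
    _ = 2 ^ (p + 1) := by rw [← pow_add]; congr 1; omega
  · simp only [Int.cast_one, one_mul]
    push_cast
    rw [mul_assoc, ← zpow_natCast (2:ℝ) (p - L), ← zpow_add₀ (by norm_num : (2:ℝ) ≠ 0)]
    congr 2
    omega

lemma neg_mem_Fp (p : ℕ) (z : ℝ) (h : z ∈ Fp p) : -z ∈ Fp p := by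
  rcases h with h | ⟨s, m, e, hs, hm1, hm2, hz⟩
  · left; rw [h]; ring
  · right
    exact ⟨-s, m, e, by rcases hs with h | h <;> simp [h], hm1, hm2, by
      rw [hz]; push_cast; ring⟩

/-- Sterbenz's lemma: if `x, y ∈ F_p` and `0 ≤ y/2 ≤ x ≤ y`, then the exact
differences `x - y` and `y - x` again lie in `F_p` (so floating-point
subtraction is exact). -/
theorem sterbenz (p : ℕ) (x y : ℝ) (hx : x ∈ Fp p) (hy : y ∈ Fp p)
    (h1 : 0 ≤ y / 2) (h2 : y / 2 ≤ x) (h3 : x ≤ y) :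
    x - y ∈ Fp p ∧ y - x ∈ Fp p := by
  have hy0 : 0 ≤ y := by linarith
  have hx0 : 0 ≤ x := by linarith
  rcases hy with hy0' | ⟨sy, my, ey, hsy, hmy1, hmy2, hyv⟩
  · -- y = 0 forces x = 0
    have : x = 0 := le_antisymm (by linarith [hy0'.le]) hx0
    constructor <;> left <;> rw [this, hy0'] <;> ring
  rcases hx with hx0' | ⟨sx, mx, ex, hsx, hmx1, hmx2, hxv⟩
  · -- x = 0 forces y = 0
    have hyz : y = 0 := by
      have : y ≤ 0 := by rw [hx0'] at h2; linarith
      linarith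
    constructor <;> left <;> rw [hx0', hyz] <;> ring
  -- both nonzero, signs are 1
  have hmyR : (0:ℝ) < my := by
    have : (2:ℕ) ^ p ≤ my := hmy1
    have : (1:ℕ) ≤ my := le_trans (Nat.one_le_two_pow) hmy1
    exact_mod_cast Nat.lt_of_lt_of_le Nat.zero_lt_one this
  have hmxR : (0:ℝ) < mx := by
    have : (1:ℕ) ≤ mx := le_trans (Nat.one_le_two_pow) hmx1
    exact_mod_cast Nat.lt_of_lt_of_le Nat.zero_lt_one this
  have h2e : ∀ e : ℤ, (0:ℝ) < (2:ℝ) ^ e := fun e => zpow_pos (by norm_num) e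
  have hsy1 : sy = 1 := by
    rcases hsy with h | h
    · exact h
    · exfalso
      rw [h] at hyv
      have : y < 0 := by rw [hyv]; push_cast; nlinarith [h2e ey]
      have hy0'' : 0 < y := by
        rw [hyv]; push_cast
        nlinarith [h2e ey]
      linarith
  have hsx1 : sx = 1 := by
    rcases hsx with h | h
    · exact h
    · exfalso
      have hxneg : x < 0 := by rw [hxv, h]; push_cast; nlinarith [h2e ex]
      have hxpos : 0 < x := by
        have hyp : 0 < y := by rw [hyv, hsy1]; push_cast; nlinarith [h2e ey]
        linarith [h2]
      linarith
  rw [hsy1] at hyv; rw [hsx1] at hxv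
  simp only [Int.cast_one, one_mul] at hyv hxv
  -- show ex ≤ ey
  have hexey : ex ≤ ey := by
    by_contra h
    push_neg at h  -- ey < ex
    have hylt : y < 2 ^ (p+1) * (2:ℝ) ^ ey := by
      rw [hyv]
      have : (my:ℝ) < 2 ^ (p+1) := by exact_mod_cast hmy2
      nlinarith [h2e ey]
    have hxge : (2:ℝ) ^ p * (2:ℝ) ^ ex ≤ x := by
      rw [hxv]
      have : (2:ℝ) ^ p ≤ mx := by exact_mod_cast hmx1
      nlinarith [h2e ex]
    have key : (2:ℝ) ^ (p+1) * (2:ℝ) ^ ey ≤ 2 ^ p * (2:ℝ) ^ ex := by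
      calc (2:ℝ) ^ (p+1) * (2:ℝ) ^ ey = 2 ^ p * ((2:ℝ) ^ ey * 2) := by rw [pow_succ]; ring
      _ ≤ 2 ^ p * (2:ℝ) ^ ex := by
          have e1 : (2:ℝ) ^ ey * 2 ≤ (2:ℝ) ^ ex := by
            rw [← zpow_add_one₀ (by norm_num : (2:ℝ) ≠ 0)]
            exact zpow_le_zpow_right₀ (by norm_num) (by omega)
          exact mul_le_mul_of_nonneg_left e1 (by positivity)
    linarith
  set d := (ey - ex).toNat with hd
  have hdeq : (2:ℝ) ^ ey = (2:ℕ) ^ d * (2:ℝ) ^ ex := by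
    push_cast
    rw [← zpow_natCast (2:ℝ) d, ← zpow_add₀ (by norm_num : (2:ℝ) ≠ 0)]
    congr 1; omega
  have hxled : mx ≤ my * 2 ^ d := by
    have : (mx:ℝ) * (2:ℝ) ^ ex ≤ (my * 2 ^ d : ℕ) * (2:ℝ) ^ ex := by
      push_cast
      calc (mx:ℝ) * (2:ℝ) ^ ex = x := hxv.symm
      _ ≤ y := h3
      _ = (my:ℝ) * ((2:ℕ) ^ d * (2:ℝ) ^ ex) := by rw [hyv, hdeq]
      _ = (my:ℝ) * (2:ℝ) ^ d * (2:ℝ) ^ ex := by push_cast; ring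
    have := (mul_le_mul_iff_of_pos_right (h2e ex)).mp this
    exact_mod_cast this
  set k := my * 2 ^ d - mx with hk
  have hsub : y - x = (k : ℝ) * (2:ℝ) ^ ex := by
    rw [hyv, hxv, hdeq, hk]
    push_cast [hxled]
    ring
  rcases Nat.eq_zero_or_pos k with hk0 | hkpos
  · have hyx : y - x = 0 := by rw [hsub, hk0]; push_cast; ring
    constructor <;> left <;> linarith
  · have hklemx : k ≤ mx := by
      -- y - x ≤ x
      have hle : y - x ≤ x := by linarith [h2]
      rw [hsub, hxv] at hle
      have := (mul_le_mul_iff_of_pos_right (h2e ex)).mp hle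
      exact_mod_cast this
    have hklt : k < 2 ^ (p + 1) := lt_of_le_of_lt hklemx hmx2
    have hmem : (k : ℝ) * (2:ℝ) ^ ex ∈ Fp p := nat_mem_Fp p k ex hkpos hklt
    refine ⟨?_, by rw [hsub]; exact hmem⟩
    have := neg_mem_Fp p _ hmem
    rw [← hsub] at this
    simpa using this
end

section
/- Let x, y ∈ F_p be nonzero with the same sign and with exponents e_x ≤ e_y (where the exponent e_z of a nonzero z ∈ F_p is the unique integer with 2^{e_z} ≤ |z| < 2^{e_z+1}). If μ(x) ≥ e_y − p, where μ(x) = min{ m ∈ ℤ : x·2^{−m} ∈ ℤ }, then x − y ∈ F_p ∪ {0} and y − x ∈ F_p ∪ {0}, i.e., floating-point subtraction of x and y is exact. -/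
lemma aux_mem_Fp (p : ℕ) (k t : ℤ) (hk : k.natAbs < 2 ^ (p + 1)) :
    (k : ℝ) * (2 : ℝ) ^ t ∈ Fp p := by
  rcases eq_or_ne k 0 with rfl | hk0
  · exact Or.inl (by simp)
  · set n := k.natAbs with hn
    have hn0 : n ≠ 0 := Int.natAbs_ne_zero.mpr hk0
    set l := Nat.log 2 n with hl
    have hl1 : 2 ^ l ≤ n := Nat.pow_log_le_self 2 hn0
    have hl2 : n < 2 ^ (l + 1) := Nat.lt_pow_succ_log_self (by norm_num) n
    have hlp : l ≤ p := by
      by_contra hc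
      push_neg at hc
      have : 2 ^ (p + 1) ≤ 2 ^ l := Nat.pow_le_pow_right (by norm_num) hc
      omega
    have hsign : k.sign = 1 ∨ k.sign = -1 := by
      rcases hk0.lt_or_gt with hh | hh
      · exact Or.inr (Int.sign_eq_neg_one_of_neg hh)
      · exact Or.inl (Int.sign_eq_one_of_pos hh)
    refine Or.inr ⟨k.sign, n * 2 ^ (p - l), t - (p - l), hsign, ?_, ?_, ?_⟩
    · calc (2:ℕ) ^ p = 2 ^ l * 2 ^ (p - l) := by rw [← pow_add]; congr 1; omega
      _ ≤ n * 2 ^ (p - l) := Nat.mul_le_mul_right _ hl1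
    · calc n * 2 ^ (p - l) < 2 ^ (l + 1) * 2 ^ (p - l) :=
        (Nat.mul_lt_mul_right (by positivity)).mpr hl2
      _ = 2 ^ (p + 1) := by rw [← pow_add]; congr 1; omega
    · have hks : ((k.sign : ℝ)) * (n : ℝ) = (k : ℝ) := by
        rw [← Int.cast_natCast, ← Int.cast_mul, Int.sign_mul_natAbs]
      have key : (2:ℝ) ^ ((p - l : ℕ)) * (2:ℝ) ^ (t - ((p:ℤ) - l)) = 2 ^ t := by
        rw [← zpow_natCast (2:ℝ) (p - l), ← zpow_add₀ (two_ne_zero)]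
        congr 1; omega
      symm
      calc ((k.sign:ℝ)) * ((n * 2 ^ (p - l) : ℕ):ℝ) * 2 ^ (t - ((p:ℤ) - l))
          = ((k.sign:ℝ) * n) * ((2:ℝ)^((p-l:ℕ)) * 2 ^ (t - ((p:ℤ) - l))) := by
            push_cast [Nat.cast_sub hlp]; ring
        _ = (k:ℝ) * 2 ^ t := by rw [hks, key]

/-- Exact subtraction in `F_p`: if `x, y ∈ F_p` are nonzero with the same sign,
exponents `e_x ≤ e_y`, and `μ(x) ≥ e_y - p`, then `x - y` and `y - x` lie in
`F_p` (which contains `0`), i.e. floating-point subtraction is exact. -/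
theorem exact_sub_Fp (p : ℕ) (x y : ℝ) (hx : x ∈ Fp p) (hy : y ∈ Fp p)
    (hx0 : x ≠ 0) (hy0 : y ≠ 0) (hsign : 0 < x * y)
    (ex ey : ℤ)
    (hex : (2 : ℝ) ^ ex ≤ |x| ∧ |x| < (2 : ℝ) ^ (ex + 1))
    (hey : (2 : ℝ) ^ ey ≤ |y| ∧ |y| < (2 : ℝ) ^ (ey + 1))
    (hexy : ex ≤ ey)
    (μx : ℤ) (hμ : IsLeast {m : ℤ | ∃ k : ℤ, x = (k : ℝ) * (2 : ℝ) ^ m} μx)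
    (h : ey - (p : ℤ) ≤ μx) :
    x - y ∈ Fp p ∧ y - x ∈ Fp p := by
  obtain ⟨⟨k1, hxk⟩, -⟩ := hμ
  set t : ℤ := ey - p with ht
  -- x is an integer multiple of 2^t
  have hxrep : x = ((k1 * 2 ^ (μx - t).toNat : ℤ) : ℝ) * (2:ℝ) ^ t := by
    rw [hxk]
    push_cast
    rw [mul_assoc, show ((2:ℝ) ^ ((μx - t).toNat)) = (2:ℝ) ^ (((μx - t).toNat : ℤ)) from
      (zpow_natCast _ _).symm, ← zpow_add₀ (two_ne_zero)]
    congr 2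
    omega
  set kx : ℤ := k1 * 2 ^ (μx - t).toNat with hkx
  -- y is an integer multiple of 2^t
  rcases hy with rfl | ⟨s, m, e, hs, hm1, hm2, hye⟩
  · exact absurd rfl hy0
  have hsabs : |(s : ℝ)| = 1 := by rcases hs with rfl | rfl <;> norm_num
  have habs_y : |y| = (m : ℝ) * (2:ℝ) ^ e := by
    rw [hye, abs_mul, abs_mul, hsabs, one_mul,
      abs_of_nonneg (by positivity : (0:ℝ) ≤ (m:ℝ)),
      abs_of_nonneg (by positivity : (0:ℝ) ≤ (2:ℝ) ^ e)]
  have h2p : ((2:ℝ) ^ p : ℝ) ≤ (m : ℝ) := by exact_mod_cast Nat.cast_le.mpr hm1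
  have h2p' : (m : ℝ) < (2:ℝ) ^ (p + 1) := by exact_mod_cast Nat.cast_lt.mpr hm2
  have hy1 : (2:ℝ) ^ (e + (p:ℤ)) ≤ |y| := by
    rw [habs_y, zpow_add₀ (two_ne_zero), zpow_natCast]
    calc (2:ℝ) ^ e * 2 ^ p = 2 ^ p * 2 ^ e := by ring
      _ ≤ (m:ℝ) * 2 ^ e := by
        apply mul_le_mul_of_nonneg_right _ (by positivity)
        exact_mod_cast hm1
  have hy2 : |y| < (2:ℝ) ^ (e + (p:ℤ) + 1) := by
    rw [habs_y, show e + (p:ℤ) + 1 = ((p+1 : ℕ) : ℤ) + e by push_cast; ring,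
      zpow_add₀ (two_ne_zero), zpow_natCast]
    apply mul_lt_mul_of_pos_right _ (by positivity)
    exact_mod_cast hm2
  have hept : e + (p:ℤ) = ey := by
    by_contra hc
    rcases lt_or_gt_of_ne hc with hlt | hgt
    · have : |y| < (2:ℝ) ^ ey := lt_of_lt_of_le hy2
        (zpow_le_zpow_right₀ (by norm_num) (by omega))
      linarith [hey.1]
    · have : |y| < (2:ℝ) ^ (e + (p:ℤ)) := lt_of_lt_of_le hey.2
        (zpow_le_zpow_right₀ (by norm_num) (by omega))
      linarith [hy1]
  have hyrep : y = ((s * m : ℤ) : ℝ) * (2:ℝ) ^ t := by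
    rw [hye]; push_cast
    rw [show t = e by omega]
  -- difference
  set kd : ℤ := kx - s * m with hkd
  have hdrep : x - y = ((kd : ℤ) : ℝ) * (2:ℝ) ^ t := by
    rw [hkd, hxrep, hyrep, Int.cast_sub]; ring
  -- bound |x - y| < 2^(ey+1)
  have hx2 : |x| < (2:ℝ) ^ (ey + 1) := lt_of_lt_of_le hex.2
    (zpow_le_zpow_right₀ (by norm_num) (by omega))
  have hy2' : |y| < (2:ℝ) ^ (ey + 1) := hey.2
  have hbound : |x - y| < (2:ℝ) ^ (ey + 1) := by
    rcases mul_pos_iff.mp hsign with ⟨hxp, hyp⟩ | ⟨hxn, hyn⟩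
    · rw [abs_of_pos hxp] at hx2
      rw [abs_of_pos hyp] at hy2'
      rw [abs_lt]; constructor <;> linarith
    · rw [abs_of_neg hxn] at hx2
      rw [abs_of_neg hyn] at hy2'
      rw [abs_lt]; constructor <;> linarith
  -- so |kd| < 2^(p+1)
  have hkd_lt : kd.natAbs < 2 ^ (p + 1) := by
    have h1 : |(kd : ℝ)| * (2:ℝ) ^ t < (2:ℝ) ^ t * 2 ^ (p + 1 : ℕ) := by
      have := hbound
      rw [hdrep, abs_mul, abs_of_nonneg (by positivity : (0:ℝ) ≤ (2:ℝ) ^ t)] at this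
      calc |(kd : ℝ)| * (2:ℝ) ^ t < (2:ℝ) ^ (ey + 1) := this
        _ = (2:ℝ) ^ t * 2 ^ (p + 1 : ℕ) := by
          rw [← zpow_natCast (2:ℝ) (p+1), ← zpow_add₀ (two_ne_zero)]
          congr 1; push_cast; omega
    have h2 : |(kd : ℝ)| < (2:ℝ) ^ (p + 1 : ℕ) := by
      have hpos : (0:ℝ) < (2:ℝ) ^ t := by positivity
      nlinarith [abs_nonneg ((kd : ℝ))]
    have h3 : |kd| < (2:ℤ) ^ (p + 1) := by
      have : ((|kd| : ℤ) : ℝ) < (((2:ℤ) ^ (p + 1) : ℤ) : ℝ) := by push_cast [Int.cast_abs]; exact h2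
      exact_mod_cast this
    rw [Int.abs_eq_natAbs] at h3
    exact_mod_cast h3
  constructor
  · rw [hdrep]; exact aux_mem_Fp p kd t hkd_lt
  · have : y - x = ((-kd : ℤ) : ℝ) * (2:ℝ) ^ t := by
      push_cast; rw [neg_mul]
      rw [show ((kd:ℝ) * (2:ℝ)^t) = x - y from hdrep.symm]; ring
    rw [this]
    exact aux_mem_Fp p (-kd) t (by simpa using hkd_lt)
end

section
/- Universal approximation by Step networks under F_p: for any p ∈ ℕ, d ≤ 2^p, continuous f* : [0,1]^d → ℝ, and ε > 0, there exists a 3-layer Step network f over F_p with at most (6d + 2)K^d parameters, where K = min{ k ∈ ℕ : 1/ω_{f*}^{−1}(ε) ≤ k } and ω_{f*}^{−1} is the inverse modulus of continuity, such that |f(x) − f*(x)| ≤ |f*(x) − ⟦f*(x)⟧| + ε for all x ∈ [0,1]^d ∩ F_p^d. -/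
/-- A feedforward architecture on `d` inputs: `L` layers, layer widths, and
for each neuron in layer `l+1` (and the output neuron in layer `L`) a set of
indices of the previous layer's neurons (index `width l` denoting the bias
input `1`) that it is connected to; each connection carries one free
parameter. -/
structure Arch (d : ℕ) where
  L : ℕ
  width : ℕ → ℕ
  input_eq : width 0 = d
  output_eq : width L = 1
  idx : ℕ → ℕ → Finset ℕ
  idx_sub : ∀ l i, idx (l + 1) i ⊆ Finset.range (width l + 1)

/-- Total number of free parameters of an architecture. -/
def Arch.nParams {d : ℕ} (A : Arch d) : ℕ :=
  ∑ l ∈ Finset.range A.L, ∑ i ∈ Finset.range (A.width (l + 1)), (A.idx (l + 1) i).card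

/-- Floating-point affine map: each product `w j * v j` is rounded, and the
partial sums are accumulated left-to-right with each partial sum rounded. -/
noncomputable def fpAff (rnd : ℝ → ℝ) (w v : ℕ → ℝ) (s : List ℕ) : ℝ :=
  s.foldl (fun a j => rnd (a + rnd (w j * v j))) 0

/-- Post-activation values of layer `l` (augmented with the bias value `1` at
index `width l`), computed with rounded floating-point operations. -/
noncomputable def postAct {d : ℕ} (A : Arch d) (σ rnd : ℝ → ℝ)
    (θ : ℕ → ℕ → ℕ → ℝ) (x : ℕ → ℝ) : ℕ → ℕ → ℝ
  | 0 => fun j => if j = A.width 0 then 1 else x j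
  | l + 1 => fun j =>
      if j = A.width (l + 1) then 1
      else rnd (σ (fpAff rnd (θ (l + 1) j) (postAct A σ rnd θ x l)
        ((A.idx (l + 1) j).sort (· ≤ ·))))

/-- Network output: the (pre-activation) affine output of the last layer. -/
noncomputable def evalNet {d : ℕ} (A : Arch d) (σ rnd : ℝ → ℝ)
    (θ : ℕ → ℕ → ℕ → ℝ) (x : ℕ → ℝ) : ℝ :=
  fpAff rnd (θ A.L 0) (postAct A σ rnd θ x (A.L - 1)) ((A.idx A.L 0).sort (· ≤ ·))

/-- The binary threshold activation `Step(t) = 1[t ≥ 0]`. -/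
noncomputable def stepAct : ℝ → ℝ := fun t => if 0 ≤ t then 1 else 0

/-- Modulus of continuity of `f` on `[0,1]^d` with respect to the sup norm. -/
noncomputable def modCont (d : ℕ) (f : (Fin d → ℝ) → ℝ) (δ : ℝ) : ℝ :=
  sSup {t | ∃ x x' : Fin d → ℝ, x ∈ Set.Icc 0 1 ∧ x' ∈ Set.Icc 0 1 ∧
    (∀ j, |x j - x' j| ≤ δ) ∧ t = |f x - f x'|}

/-- Inverse modulus of continuity: `ω_f⁻¹(ε) = sup {δ ≥ 0 : ω_f(δ) ≤ ε}`. -/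
noncomputable def invMod (d : ℕ) (f : (Fin d → ℝ) → ℝ) (ε : ℝ) : ℝ :=
  sSup {δ | 0 ≤ δ ∧ modCont d f δ ≤ ε}

namespace UA

variable {p : ℕ}

lemma zero_mem : (0:ℝ) ∈ Fp p := Or.inl rfl

lemma pos_rep {m : ℕ} {e : ℤ} (h1 : 2 ^ p ≤ m) (h2 : m < 2 ^ (p+1)) :
    ((m : ℝ) * (2:ℝ) ^ e) ∈ Fp p := by
  refine Or.inr ⟨1, m, e, Or.inl rfl, h1, h2, by push_cast; ring⟩

lemma neg_mem {x : ℝ} (hx : x ∈ Fp p) : -x ∈ Fp p := by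
  rcases hx with h | ⟨s, m, e, hs, h1, h2, h3⟩
  · exact Or.inl (by rw [h, neg_zero])
  · exact Or.inr ⟨-s, m, e, by rcases hs with h|h <;> simp [h], h1, h2, by push_cast [h3]; ring⟩

lemma pow2_mem (e : ℤ) : ((2:ℝ) ^ e) ∈ Fp p := by
  have h := pos_rep (p := p) (m := 2 ^ p) (e := e - p) le_rfl
    (by exact Nat.pow_lt_pow_right one_lt_two (Nat.lt_succ_self p))
  have : ((2 ^ p : ℕ) : ℝ) * (2:ℝ) ^ (e - (p:ℤ)) = (2:ℝ) ^ e := by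
    push_cast
    rw [← zpow_natCast (2:ℝ) p, ← zpow_add₀ (by norm_num : (2:ℝ) ≠ 0)]
    ring_nf
  rwa [this] at h

lemma one_mem : (1:ℝ) ∈ Fp p := by simpa using pow2_mem (p := p) 0

lemma two_mem : (2:ℝ) ∈ Fp p := by simpa using pow2_mem (p := p) 1

lemma nat_mem {n : ℕ} (h1 : 1 ≤ n) (h2 : n ≤ 2 ^ (p+1)) : (n : ℝ) ∈ Fp p := by
  rcases eq_or_lt_of_le h2 with rfl | h2
  · have := pos_rep (p := p) (m := 2 ^ p) (e := 1) le_rfl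
      (Nat.pow_lt_pow_right one_lt_two (Nat.lt_succ_self p))
    have h : ((2 ^ p : ℕ) : ℝ) * (2:ℝ) ^ (1:ℤ) = ((2 ^ (p+1) : ℕ) : ℝ) := by
      push_cast; ring
    rwa [h] at this
  · set L := Nat.log 2 n with hL
    have hlow : 2 ^ L ≤ n := Nat.pow_log_le_self 2 (by omega)
    have hhigh : n < 2 ^ (L + 1) := Nat.lt_pow_succ_log_self one_lt_two n
    have hLp : L ≤ p := by
      by_contra hc
      push_neg at hc
      have : 2 ^ (p+1) ≤ 2 ^ L := Nat.pow_le_pow_right (by norm_num) hc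
      omega
    have hm1 : 2 ^ p ≤ n * 2 ^ (p - L) := by
      calc 2 ^ p = 2 ^ L * 2 ^ (p - L) := by rw [← pow_add]; congr 1; omega
      _ ≤ n * 2 ^ (p - L) := Nat.mul_le_mul_right _ hlow
    have hm2 : n * 2 ^ (p - L) < 2 ^ (p + 1) := by
      calc n * 2 ^ (p - L) < 2 ^ (L + 1) * 2 ^ (p - L) := by
            exact (Nat.mul_lt_mul_right (Nat.pow_pos (by norm_num))).mpr hhigh
        _ = 2 ^ (p + 1) := by rw [← pow_add]; congr 1; omega
    have := pos_rep (p := p) (m := n * 2 ^ (p - L)) (e := (L : ℤ) - p) hm1 hm2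
    have heq : ((n * 2 ^ (p - L) : ℕ) : ℝ) * (2:ℝ) ^ ((L:ℤ) - p) = (n : ℝ) := by
      push_cast
      rw [mul_assoc, ← zpow_natCast (2:ℝ) (p - L), ← zpow_add₀ (by norm_num : (2:ℝ) ≠ 0)]
      have : ((p - L : ℕ) : ℤ) + ((L:ℤ) - p) = 0 := by omega
      rw [this, zpow_zero, mul_one]
    rwa [heq] at this

lemma int_mem {z : ℤ} (hz : z ≠ 0) (h : |z| ≤ 2 ^ (p+1)) : (z : ℝ) ∈ Fp p := by
  rcases lt_or_gt_of_ne hz with h1 | h1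
  · have : ((-z).toNat : ℝ) ∈ Fp p := by
      apply nat_mem (by omega)
      have h' : ((-z).toNat : ℤ) ≤ ((2 ^ (p+1) : ℕ) : ℤ) := by
        rw [Int.toNat_of_nonneg (by omega)]
        rw [abs_of_neg h1] at h
        push_cast
        exact_mod_cast h
      exact_mod_cast h'
    have h2 := neg_mem this
    have : -(((-z).toNat : ℕ) : ℝ) = (z : ℝ) := by
      rw [← Int.cast_natCast, Int.toNat_of_nonneg (by omega)]
      push_cast; ring
    rwa [this] at h2
  · have : (z.toNat : ℝ) ∈ Fp p := by
      apply nat_mem (by omega)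
      have h' : (z.toNat : ℤ) ≤ ((2 ^ (p+1) : ℕ) : ℤ) := by
        rw [Int.toNat_of_nonneg (by omega)]
        rw [abs_of_pos h1] at h
        push_cast
        exact_mod_cast h
      exact_mod_cast h'
    rwa [show ((z.toNat : ℕ) : ℝ) = (z:ℝ) by rw [← Int.cast_natCast, Int.toNat_of_nonneg (by omega)]] at this

/-- least element of `Fp p` that is `≥ r`, for `r > 0`; it also satisfies `t - r < r`. -/
lemma leastFp {r : ℝ} (hr : 0 < r) :
    ∃ t ∈ Fp p, r ≤ t ∧ t - r < r ∧ ∀ x ∈ Fp p, r ≤ x → t ≤ x := by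
  obtain ⟨n, hn1, hn2⟩ := exists_mem_Ico_zpow (K := ℝ) hr one_lt_two
  set e : ℤ := n - p with he
  have h2e : (0:ℝ) < (2:ℝ) ^ e := zpow_pos (by norm_num) _
  set y : ℝ := r / (2:ℝ) ^ e with hy
  have hy1 : ((2:ℕ) ^ p : ℝ) ≤ y := by
    rw [hy, le_div_iff₀ h2e]
    push_cast
    calc (2:ℝ) ^ p * 2 ^ e = (2:ℝ) ^ ((p : ℤ) + e) := by
          rw [zpow_add₀ (by norm_num : (2:ℝ) ≠ 0), zpow_natCast]
      _ = (2:ℝ) ^ n := by congr 1; omega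
      _ ≤ r := hn1
  have hy2 : y < ((2:ℕ) ^ (p+1) : ℝ) := by
    rw [hy, div_lt_iff₀ h2e]
    push_cast
    calc r < (2:ℝ) ^ (n+1) := hn2
      _ = (2:ℝ) ^ ((p:ℤ) + 1 + e) := by congr 1; omega
      _ = (2:ℝ) ^ (p+1) * 2 ^ e := by
          rw [← zpow_natCast (2:ℝ) (p+1), ← zpow_add₀ (by norm_num : (2:ℝ) ≠ 0)]
          congr 1
  set c : ℤ := ⌈y⌉ with hc
  have hc1 : ((2:ℕ)^p : ℤ) ≤ c := by
    have := Int.le_ceil y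
    have h := le_trans hy1 (Int.le_ceil y)
    exact_mod_cast h
  have hc2 : c ≤ ((2:ℕ)^(p+1) : ℤ) := by
    apply Int.ceil_le.2
    exact_mod_cast hy2.le
  refine ⟨(c : ℝ) * (2:ℝ) ^ e, ?_, ?_, ?_, ?_⟩
  · rcases eq_or_lt_of_le hc2 with hceq | hclt
    · rw [hceq]
      have := pow2_mem (p := p) (e + 1)
      have heq : (((2:ℕ) ^ (p+1) : ℤ) : ℝ) * (2:ℝ) ^ e = ((2^p : ℕ) : ℝ) * (2:ℝ) ^ (e + 1) := by
        push_cast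
        rw [zpow_add₀ (by norm_num : (2:ℝ) ≠ 0)]
        ring
      rw [heq]
      exact pos_rep le_rfl (Nat.pow_lt_pow_right one_lt_two (Nat.lt_succ_self p))
    · have : ((c.toNat : ℕ) : ℝ) * (2:ℝ)^e ∈ Fp p := by
        apply pos_rep
        · omega
        · omega
      rwa [show ((c.toNat : ℕ) : ℝ) = (c:ℝ) by exact_mod_cast congrArg Int.cast (Int.toNat_of_nonneg (by positivity)) ] at this
  · calc r = y * (2:ℝ)^e := by rw [hy, div_mul_cancel₀ _ (ne_of_gt h2e)]
      _ ≤ (c:ℝ) * (2:ℝ)^e := by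
          apply mul_le_mul_of_nonneg_right (Int.le_ceil y) h2e.le
  · have h1 : (c:ℝ) < y + 1 := Int.ceil_lt_add_one y
    have h2 : (c:ℝ) * (2:ℝ)^e - r < (2:ℝ)^e := by
      have : r = y * (2:ℝ)^e := by rw [hy, div_mul_cancel₀ _ (ne_of_gt h2e)]
      rw [this]
      nlinarith
    have h3 : (2:ℝ)^e ≤ (2:ℝ)^n := by
      apply zpow_le_zpow_right₀ (by norm_num : (1:ℝ) ≤ 2)
      omega
    linarith
  · rintro x (rfl | ⟨s, m, e', hs, hm1, hm2, rfl⟩) hx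
    · linarith
    · rcases hs with rfl | rfl
      swap
      · exfalso
        have hm0 : (0:ℝ) < m := by
          have : (0:ℕ) < m := lt_of_lt_of_le (Nat.pow_pos (by norm_num)) hm1
          exact_mod_cast this
        have : ((-1 : ℤ) : ℝ) * m * (2:ℝ)^e' < 0 := by
          push_cast
          nlinarith [zpow_pos (by norm_num : (0:ℝ) < 2) e']
        linarith
      simp only [Int.cast_one, one_mul] at hx ⊢
      rcases le_or_gt e e' with hee | hee
      · set q : ℤ := (m : ℤ) * 2 ^ (e' - e).toNat with hq
        have hxq : (m:ℝ) * (2:ℝ)^e' = (q : ℝ) * (2:ℝ)^e := by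
          rw [hq]
          push_cast
          rw [mul_assoc, ← zpow_natCast (2:ℝ), ← zpow_add₀ (by norm_num : (2:ℝ) ≠ 0)]
          congr 2
          omega
        rw [hxq] at hx ⊢
        have hyq : y ≤ (q : ℝ) := by
          rw [hy, div_le_iff₀ h2e]
          exact hx
        have : c ≤ q := Int.ceil_le.2 hyq
        apply mul_le_mul_of_nonneg_right _ h2e.le
        exact_mod_cast this
      · exfalso
        have hlt : (m:ℝ) * (2:ℝ)^e' < (2:ℝ)^n := by
          calc (m:ℝ) * (2:ℝ)^e' < ((2:ℕ)^(p+1) : ℝ) * (2:ℝ)^e' := by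
                apply mul_lt_mul_of_pos_right _ (zpow_pos (by norm_num) _)
                exact_mod_cast hm2
            _ ≤ ((2:ℕ)^(p+1) : ℝ) * (2:ℝ)^(e-1) := by
                apply mul_le_mul_of_nonneg_left
                · apply zpow_le_zpow_right₀ (by norm_num : (1:ℝ) ≤ 2); omega
                · positivity
            _ = (2:ℝ)^n := by
                push_cast
                rw [← zpow_natCast (2:ℝ) (p+1), ← zpow_add₀ (by norm_num : (2:ℝ) ≠ 0)]
                congr 1
                push_cast
                omega
        linarith

/-! ### Rounding -/

section Round

variable {p : ℕ} {rnd : ℝ → ℝ}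

def RoundsTo' (p : ℕ) (r z : ℝ) : Prop :=
  z ∈ Fp p ∧ (∀ w ∈ Fp p, |r - z| ≤ |r - w|)

variable (hrnd : ∀ r, RoundsTo' p r (rnd r))
include hrnd

lemma rnd_mem (r : ℝ) : rnd r ∈ Fp p := (hrnd r).1

lemma rnd_fix {r : ℝ} (hr : r ∈ Fp p) : rnd r = r := by
  have := (hrnd r).2 r hr
  simp only [sub_self, abs_zero] at this
  have h0 : |r - rnd r| = 0 := le_antisymm this (abs_nonneg _)
  have := abs_eq_zero.1 h0
  linarith

lemma rnd_zero : rnd 0 = 0 := rnd_fix hrnd zero_mem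

lemma rnd_pos {r : ℝ} (hr : 0 < r) : 0 < rnd r := by
  obtain ⟨t, htF, htr, htlt, -⟩ := leastFp (p := p) hr
  have h := (hrnd r).2 t htF
  have : |r - t| = t - r := by rw [abs_of_nonpos (by linarith)]; ring
  rw [this] at h
  have : |r - rnd r| < r := lt_of_le_of_lt h htlt
  have := abs_lt.1 this
  linarith [this.2]

lemma rnd_neg {r : ℝ} (hr : r < 0) : rnd r < 0 := by
  obtain ⟨t, htF, htr, htlt, -⟩ := leastFp (p := p) (by linarith : (0:ℝ) < -r)
  have h := (hrnd r).2 (-t) (neg_mem htF)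
  have : |r - -t| = t - -r := by rw [show r - -t = -(-r - t) by ring, abs_neg, abs_of_nonpos (by linarith)]; ring
  rw [this] at h
  have : |r - rnd r| < -r := lt_of_le_of_lt h htlt
  have := abs_lt.1 this
  linarith [this.1]

lemma rnd_nonneg_iff (r : ℝ) : 0 ≤ rnd r ↔ 0 ≤ r := by
  constructor
  · intro h
    by_contra hc
    push_neg at hc
    exact absurd h (not_le.2 (rnd_neg hrnd hc))
  · intro h
    rcases eq_or_lt_of_le h with h | h
    · rw [← h, rnd_zero hrnd]
    · exact (rnd_pos hrnd h).le

lemma rnd_int {z : ℤ} (h : |z| ≤ 2 ^ (p+1)) : rnd (z:ℝ) = (z:ℝ) := by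
  rcases eq_or_ne z 0 with rfl | hz
  · simpa using rnd_zero hrnd
  · exact rnd_fix hrnd (int_mem hz h)

end Round

/-! ### Digits -/

def dig (K j c : ℕ) : ℕ := c / K ^ j % K

lemma dig_lt {K : ℕ} (hK : 0 < K) (j c : ℕ) : dig K j c < K := Nat.mod_lt _ hK

lemma dig_sum {K : ℕ} (hK : 0 < K) :
    ∀ (d : ℕ) (a : ℕ → ℕ), (∀ j, j < d → a j < K) → ∀ j, j < d →
      dig K j (∑ i ∈ Finset.range d, a i * K ^ i) = a j := by
  intro d
  induction d with
  | zero => intro a _ j hj; omega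
  | succ d ih =>
    intro a ha j hj
    have hsplit : ∑ i ∈ Finset.range (d+1), a i * K ^ i
        = (∑ i ∈ Finset.range d, a (i+1) * K ^ i) * K + a 0 := by
      rw [Finset.sum_range_succ']
      congr 1
      · rw [Finset.sum_mul]
        apply Finset.sum_congr rfl
        intro i _
        rw [pow_succ]
        ring
      · simp
    rcases Nat.eq_zero_or_pos j with rfl | hjpos
    · rw [hsplit]
      simp only [dig, pow_zero, Nat.div_one]
      rw [Nat.mul_add_mod']
      exact Nat.mod_eq_of_lt (ha 0 (by omega))
    · obtain ⟨j', rfl⟩ : ∃ j', j = j' + 1 := ⟨j - 1, by omega⟩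
      have hdiv : (∑ i ∈ Finset.range (d+1), a i * K ^ i) / K
          = ∑ i ∈ Finset.range d, a (i+1) * K ^ i := by
        rw [hsplit, mul_comm (∑ i ∈ Finset.range d, a (i+1) * K ^ i) K,
          Nat.mul_add_div hK, Nat.div_eq_of_lt (ha 0 (by omega))]
        omega
      have : dig K (j'+1) (∑ i ∈ Finset.range (d+1), a i * K ^ i)
          = dig K j' (∑ i ∈ Finset.range d, a (i+1) * K ^ i) := by
        unfold dig
        rw [← hdiv, pow_succ, Nat.div_div_eq_div_mul, mul_comm (K ^ j') K]
      rw [this]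
      exact ih (fun i => a (i+1)) (fun i hi => ha (i+1) (by omega)) j' (by omega)

lemma sum_dig {K : ℕ} (hK : 0 < K) :
    ∀ (d c : ℕ), c < K ^ d → (∑ j ∈ Finset.range d, dig K j c * K ^ j) = c := by
  intro d
  induction d with
  | zero =>
    intro c hc
    rw [pow_zero] at hc
    obtain rfl : c = 0 := by omega
    simp
  | succ d ih =>
    intro c hc
    have h1 : ∑ j ∈ Finset.range (d+1), dig K j c * K ^ j
        = (∑ j ∈ Finset.range d, dig K j (c / K) * K ^ j) * K + dig K 0 c := by
      rw [Finset.sum_range_succ']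
      congr 1
      · rw [Finset.sum_mul]
        apply Finset.sum_congr rfl
        intro i _
        have : dig K (i+1) c = dig K i (c / K) := by
          unfold dig
          rw [pow_succ, mul_comm (K ^ i) K, ← Nat.div_div_eq_div_mul]
        rw [this, pow_succ]
        ring
      · simp [dig]
    rw [h1, ih (c / K) (by rw [Nat.div_lt_iff_lt_mul hK]; rw [pow_succ] at hc; exact hc)]
    simp only [dig, pow_zero, Nat.div_one]
    rw [mul_comm]
    exact Nat.div_add_mod c K

lemma sum_digits_lt {K : ℕ} (hK : 0 < K) (d : ℕ) (a : ℕ → ℕ) (ha : ∀ j, j < d → a j < K) :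
    (∑ j ∈ Finset.range d, a j * K ^ j) < K ^ d := by
  induction d with
  | zero => simp
  | succ d ih =>
    rw [Finset.sum_range_succ, pow_succ]
    have h1 : (∑ j ∈ Finset.range d, a j * K ^ j) < K ^ d := ih (fun j hj => ha j (by omega))
    have h2 : a d * K ^ d ≤ (K - 1) * K ^ d := Nat.mul_le_mul_right _ (by have := ha d (by omega); omega)
    have h3 : K ^ d + (K - 1) * K ^ d = K ^ d * K := by
      have : K ^ d + (K - 1) * K ^ d = (1 + (K - 1)) * K ^ d := by ring
      rw [this, show 1 + (K - 1) = K by omega]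
      ring
    omega

/-! ### Sorting helpers -/

lemma sort_eq_of {s : Finset ℕ} {l : List ℕ} (h1 : l.Pairwise (· ≤ ·)) (h2 : l.Nodup)
    (h3 : ∀ x, x ∈ s ↔ x ∈ l) : s.sort (· ≤ ·) = l :=
  List.Perm.eq_of_pairwise' (s.pairwise_sort _) h1
    ((List.perm_ext_iff_of_nodup (s.sort_nodup _) h2).mpr
      (fun a => (Finset.mem_sort _).trans (h3 a)))

lemma sort_pair {a b : ℕ} (h : a < b) : ({a, b} : Finset ℕ).sort (· ≤ ·) = [a, b] := by
  apply sort_eq_of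
  · simp [h.le]
  · simp [List.Nodup, h.ne]
  · intro x; simp


/-! ### Layer-2 index list -/

def blockL (K c j : ℕ) : List ℕ := [j*(K+1) + dig K j c, j*(K+1) + dig K j c + 1]

def body (d K c : ℕ) : List ℕ := (List.range d).flatMap (blockL K c)

def L2list (d K c : ℕ) : List ℕ := body d K c ++ [d*(K+1)]

lemma mem_body {d K c x : ℕ} :
    x ∈ body d K c ↔ ∃ j, j < d ∧
      (x = j*(K+1) + dig K j c ∨ x = j*(K+1) + dig K j c + 1) := by
  simp only [body, List.mem_flatMap, List.mem_range, blockL, List.mem_cons,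
    List.mem_singleton, List.not_mem_nil, or_false]

lemma body_lt {K : ℕ} (hK : 0 < K) {d c x : ℕ} (hx : x ∈ body d K c) : x < d*(K+1) := by
  obtain ⟨j, hj, hx⟩ := mem_body.1 hx
  have hdig := dig_lt hK j c
  have h1 : (j+1)*(K+1) = j*(K+1) + (K+1) := by ring
  have h2 : (j+1)*(K+1) ≤ d*(K+1) := Nat.mul_le_mul_right _ (by omega)
  omega

lemma body_succ (d K c : ℕ) : body (d+1) K c = body d K c ++ blockL K c d := by
  unfold body
  rw [List.range_succ, List.flatMap_append]
  simp

lemma body_sorted {K : ℕ} (hK : 0 < K) (d c : ℕ) : (body d K c).Pairwise (· < ·) := by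
  induction d with
  | zero => simp [body]
  | succ d ih =>
    rw [body_succ]
    rw [List.pairwise_append]
    refine ⟨ih, by simp [blockL], ?_⟩
    intro a ha b hb
    have h1 : a < d*(K+1) := body_lt hK ha
    have h2 : d*(K+1) ≤ b := by
      simp only [blockL, List.mem_cons, List.mem_singleton, List.not_mem_nil, or_false] at hb
      rcases hb with rfl | rfl <;> omega
    omega

lemma L2_sorted {K : ℕ} (hK : 0 < K) (d c : ℕ) : (L2list d K c).Pairwise (· < ·) := by
  rw [L2list, List.pairwise_append]
  refine ⟨body_sorted hK d c, by simp, ?_⟩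
  intro a ha b hb
  simp only [List.mem_singleton] at hb
  subst hb
  exact body_lt hK ha

lemma L2_sorted_le {K : ℕ} (hK : 0 < K) (d c : ℕ) : (L2list d K c).Pairwise (· ≤ ·) :=
  (L2_sorted hK d c).imp le_of_lt

lemma L2_nodup {K : ℕ} (hK : 0 < K) (d c : ℕ) : (L2list d K c).Nodup :=
  (L2_sorted hK d c).imp ne_of_lt

lemma L2_mem_le {K : ℕ} (hK : 0 < K) {d c x : ℕ} (hx : x ∈ L2list d K c) : x ≤ d*(K+1) := by
  rw [L2list, List.mem_append] at hx
  rcases hx with hx | hx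
  · exact (body_lt hK hx).le
  · simp only [List.mem_singleton] at hx; omega

lemma L2_sort {K : ℕ} (hK : 0 < K) (d c : ℕ) :
    ((L2list d K c).toFinset).sort (· ≤ ·) = L2list d K c :=
  sort_eq_of (L2_sorted_le hK d c) (L2_nodup hK d c) (fun x => List.mem_toFinset)

lemma body_length (d K c : ℕ) : (body d K c).length = 2*d := by
  induction d with
  | zero => simp [body]
  | succ d ih => rw [body_succ, List.length_append, ih]; simp [blockL]; omega

lemma L2_card {K : ℕ} (hK : 0 < K) (d c : ℕ) : (L2list d K c).toFinset.card = 2*d+1 := by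
  rw [List.toFinset_card_of_nodup (L2_nodup hK d c), L2list, List.length_append,
    body_length]
  simp

/-! ### foldl helper -/

lemma foldl_zero {rnd : ℝ → ℝ} {w v : ℕ → ℝ} :
    ∀ (l : List ℕ) (a : ℝ), rnd a = a → (∀ c ∈ l, rnd (w c * v c) = 0) →
      l.foldl (fun a j => rnd (a + rnd (w j * v j))) a = a := by
  intro l
  induction l with
  | nil => intro a ha _; simp
  | cons c l ih =>
    intro a ha hl
    simp only [List.foldl_cons]
    rw [hl c (by simp), add_zero, ha]
    exact ih a ha (fun c' hc' => hl c' (by simp [hc']))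

/-! ### The architecture -/

def uaWidth (d K : ℕ) : ℕ → ℕ := fun l =>
  if l = 0 then d else if l = 1 then d*(K+1) else if l = 2 then K ^ d else 1

def uaIdx (d K : ℕ) : ℕ → ℕ → Finset ℕ := fun l n =>
  if l = 1 ∧ n < d*(K+1) then {n / (K+1), d}
  else if l = 2 ∧ n < K ^ d then (L2list d K n).toFinset
  else if l = 3 ∧ n = 0 then Finset.range (K ^ d)
  else ∅

def uaArch (d K : ℕ) (hK : 0 < K) : Arch d where
  L := 3
  width := uaWidth d K
  input_eq := rfl
  output_eq := rfl
  idx := uaIdx d K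
  idx_sub := by
    intro l i x hx
    simp only [uaIdx] at hx
    split_ifs at hx with h1 h2 h3
    · obtain ⟨hl, hi⟩ := h1
      obtain rfl : l = 0 := by omega
      simp only [Finset.mem_insert, Finset.mem_singleton] at hx
      show x ∈ Finset.range (d + 1)
      rw [Finset.mem_range]
      rcases hx with rfl | rfl
      · have : i / (K+1) < d := (Nat.div_lt_iff_lt_mul (by omega)).2 (by omega)
        omega
      · omega
    · obtain ⟨hl, hi⟩ := h2
      obtain rfl : l = 1 := by omega
      rw [List.mem_toFinset] at hx
      have := L2_mem_le hK hx
      show x ∈ Finset.range (d*(K+1) + 1)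
      rw [Finset.mem_range]
      omega
    · obtain ⟨hl, hi⟩ := h3
      obtain rfl : l = 2 := by omega
      simp only [Finset.mem_range] at hx
      show x ∈ Finset.range (K ^ d + 1)
      rw [Finset.mem_range]
      omega
    · exact absurd hx (Finset.notMem_empty x)

lemma uaArch_nParams {d K : ℕ} (hK : 0 < K) :
    (uaArch d K hK).nParams ≤ (6*d+2) * K ^ d := by
  have hKd : 1 ≤ K ^ d := Nat.one_le_pow _ _ hK
  have hw1 : (uaArch d K hK).width 1 = d*(K+1) := rfl
  have hw2 : (uaArch d K hK).width 2 = K ^ d := rfl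
  have hw3 : (uaArch d K hK).width 3 = 1 := rfl
  have hL : (uaArch d K hK).L = 3 := rfl
  rw [Arch.nParams, hL]
  rw [Finset.sum_range_succ, Finset.sum_range_succ, Finset.sum_range_succ,
    Finset.sum_range_zero, hw1, hw2, hw3]
  have s1 : ∑ i ∈ Finset.range (d*(K+1)), ((uaArch d K hK).idx 1 i).card ≤ d*(K+1)*2 := by
    calc ∑ i ∈ Finset.range (d*(K+1)), ((uaArch d K hK).idx 1 i).card
        ≤ ∑ _i ∈ Finset.range (d*(K+1)), 2 := by
          apply Finset.sum_le_sum
          intro i hi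
          rw [Finset.mem_range] at hi
          show (uaIdx d K 1 i).card ≤ 2
          rw [uaIdx, if_pos ⟨rfl, hi⟩]
          exact (Finset.card_insert_le _ _).trans (by simp)
      _ = d*(K+1)*2 := by rw [Finset.sum_const, Finset.card_range]; ring
  have s2 : ∑ i ∈ Finset.range (K ^ d), ((uaArch d K hK).idx 2 i).card = K ^ d * (2*d+1) := by
    rw [Finset.sum_congr rfl (fun i hi => ?_), Finset.sum_const, Finset.card_range, smul_eq_mul]
    rw [Finset.mem_range] at hi
    show (uaIdx d K 2 i).card = 2*d+1
    rw [uaIdx]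
    norm_num
    rw [if_pos hi]
    exact L2_card hK d i
  have s3 : ∑ i ∈ Finset.range 1, ((uaArch d K hK).idx 3 i).card = K ^ d := by
    rw [Finset.sum_range_one]
    show (uaIdx d K 3 0).card = K ^ d
    rw [uaIdx]
    norm_num
  rw [s2, s3]
  have hdK : d * K ≤ d * K ^ d := by
    rcases Nat.eq_zero_or_pos d with rfl | hd
    · simp
    · exact Nat.mul_le_mul_left d (Nat.le_self_pow (by omega) K)
  have hd1 : d ≤ d * K ^ d := Nat.le_mul_of_pos_right d hKd
  calc (0 + ∑ i ∈ Finset.range (d*(K+1)), ((uaArch d K hK).idx 1 i).card)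
        + K ^ d * (2*d+1) + K ^ d
      ≤ d*(K+1)*2 + K ^ d * (2*d+1) + K ^ d := by omega
    _ ≤ (6*d+2) * K ^ d := by nlinarith

/-! ### Modulus of continuity -/

lemma claimC {d : ℕ} {f : (Fin d → ℝ) → ℝ} (hf : ContinuousOn f (Set.Icc 0 1))
    {ε : ℝ} (hε : 0 < ε) {K : ℕ} (hK1 : 1 ≤ K) (hKle : 1 / invMod d f ε ≤ (K:ℝ)) :
    ∀ y y' : Fin d → ℝ, y ∈ Set.Icc 0 1 → y' ∈ Set.Icc 0 1 →
      (∀ j, |y j - y' j| ≤ 1/(K:ℝ)) → |f y - f y'| ≤ ε := by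
  have hKpos : (0:ℝ) < K := by exact_mod_cast hK1
  have hcomp : IsCompact (Set.Icc (0:Fin d → ℝ) 1) := isCompact_Icc
  obtain ⟨C, hC⟩ := hcomp.exists_bound_of_continuousOn hf
  have hbddM : ∀ δ : ℝ, BddAbove {t | ∃ x x' : Fin d → ℝ, x ∈ Set.Icc 0 1 ∧ x' ∈ Set.Icc 0 1 ∧
      (∀ j, |x j - x' j| ≤ δ) ∧ t = |f x - f x'|} := by
    intro δ
    refine ⟨C + C, ?_⟩
    rintro t ⟨x, x', hx, hx', -, rfl⟩
    have h1 := hC x hx; have h2 := hC x' hx'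
    rw [Real.norm_eq_abs] at h1 h2
    calc |f x - f x'| ≤ |f x| + |f x'| := by
          rw [sub_eq_add_neg]
          exact (abs_add_le _ _).trans (by rw [abs_neg])
      _ ≤ C + C := by linarith
  have hrange : ∀ x x' : Fin d → ℝ, x ∈ Set.Icc 0 1 → x' ∈ Set.Icc 0 1 → ∀ δ : ℝ,
      (∀ j, |x j - x' j| ≤ δ) → |f x - f x'| ≤ modCont d f δ := by
    intro x x' hx hx' δ h
    exact le_csSup (hbddM δ) ⟨x, x', hx, hx', h, rfl⟩
  have hu := hcomp.uniformContinuousOn_of_continuous hf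
  rw [Metric.uniformContinuousOn_iff] at hu
  obtain ⟨δ₀, hδ₀pos, hδ₀⟩ := hu ε hε
  have hδ₀mem : δ₀/2 ∈ {δ : ℝ | 0 ≤ δ ∧ modCont d f δ ≤ ε} := by
    constructor
    · linarith
    · apply Real.sSup_le _ hε.le
      rintro t ⟨x, x', hx, hx', hcoord, rfl⟩
      have hdist : dist x x' ≤ δ₀/2 :=
        (dist_pi_le_iff (by linarith)).2 (fun j => by rw [Real.dist_eq]; exact hcoord j)
      have := hδ₀ x hx x' hx' (lt_of_le_of_lt hdist (by linarith))
      rw [Real.dist_eq] at this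
      exact this.le
  have hSne : {δ : ℝ | 0 ≤ δ ∧ modCont d f δ ≤ ε}.Nonempty := ⟨δ₀/2, hδ₀mem⟩
  have hstep2 : ∀ D : ℝ, D < 1/(K:ℝ) →
      ∃ δ', (0 ≤ δ' ∧ modCont d f δ' ≤ ε) ∧ D < δ' := by
    intro D hD
    by_cases hb : BddAbove {δ : ℝ | 0 ≤ δ ∧ modCont d f δ ≤ ε}
    · have hpos : 0 < invMod d f ε := lt_of_lt_of_le (by linarith) (le_csSup hb hδ₀mem)
      have h1K : 1/(K:ℝ) ≤ invMod d f ε := by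
        rw [div_le_iff₀ hpos] at hKle
        rw [div_le_iff₀ hKpos]
        nlinarith
      obtain ⟨δ', hδ'mem, hδ'⟩ := exists_lt_of_lt_csSup hSne (lt_of_lt_of_le hD h1K)
      exact ⟨δ', hδ'mem, hδ'⟩
    · obtain ⟨δ', hmem, hlt⟩ := not_bddAbove_iff.1 hb D
      exact ⟨δ', hmem, hlt⟩
  have hC' : ∀ y z : Fin d → ℝ, y ∈ Set.Icc 0 1 → z ∈ Set.Icc 0 1 →
      (∀ j, |y j - z j| < 1/(K:ℝ)) → |f y - f z| ≤ ε := by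
    intro y z hy hz hcoord
    rcases Nat.eq_zero_or_pos d with hd0 | hdpos
    · subst hd0
      have hyz : y = z := funext (fun j => j.elim0)
      rw [hyz, sub_self, abs_zero]; exact hε.le
    · have hne : (Finset.univ : Finset (Fin d)).Nonempty := ⟨⟨0, hdpos⟩, Finset.mem_univ _⟩
      set D := Finset.univ.sup' hne (fun j => |y j - z j|) with hDdef
      have hDlt : D < 1/(K:ℝ) := (Finset.sup'_lt_iff hne).2 (fun j _ => hcoord j)
      obtain ⟨δ', ⟨hδ'0, hδ'ε⟩, hlt⟩ := hstep2 D hDlt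
      refine le_trans (hrange y z hy hz δ' (fun j => ?_)) hδ'ε
      have hj : |y j - z j| ≤ D := by
        rw [hDdef]
        exact Finset.le_sup' (fun j => |y j - z j|) (Finset.mem_univ j)
      exact le_trans hj hlt.le
  intro y y' hy hy' hcoord
  set g : ℝ → (Fin d → ℝ) := fun θ => fun j => y j + θ * (y' j - y j) with hg
  have hgmem : ∀ θ : ℝ, θ ∈ Set.Ico (0:ℝ) 1 → g θ ∈ Set.Icc (0:Fin d → ℝ) 1 := by
    intro θ hθ
    obtain ⟨hθ0, hθ1⟩ := hθ
    constructor
    · intro j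
      show (0:ℝ) ≤ y j + θ * (y' j - y j)
      nlinarith [hy.1 j, hy'.1 j, mul_nonneg hθ0 (hy'.1 j),
        mul_nonneg (by linarith : (0:ℝ) ≤ 1 - θ) (hy.1 j)]
    · intro j
      show y j + θ * (y' j - y j) ≤ (1 : ℝ)
      have h1 : y' j ≤ (1:ℝ) := hy'.2 j
      have h2 : y j ≤ (1:ℝ) := hy.2 j
      nlinarith [mul_le_mul_of_nonneg_left h1 hθ0,
        mul_le_mul_of_nonneg_left h2 (by linarith : (0:ℝ) ≤ 1 - θ)]
  have hbound : ∀ θ : ℝ, θ ∈ Set.Ico (0:ℝ) 1 → |f y - f (g θ)| ≤ ε := by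
    intro θ hθ
    apply hC' y (g θ) hy (hgmem θ hθ)
    intro j
    have heq : |y j - g θ j| = θ * |y' j - y j| := by
      show |y j - (y j + θ * (y' j - y j))| = θ * |y' j - y j|
      rw [show y j - (y j + θ * (y' j - y j)) = -(θ * (y' j - y j)) by ring, abs_neg,
        abs_mul, abs_of_nonneg hθ.1]
    rw [heq]
    have h1 : |y' j - y j| ≤ 1/(K:ℝ) := by rw [abs_sub_comm]; exact hcoord j
    have h2 : θ * |y' j - y j| ≤ θ * (1/(K:ℝ)) := mul_le_mul_of_nonneg_left h1 hθ.1
    have h3 : θ * (1/(K:ℝ)) < 1 * (1/(K:ℝ)) := by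
      apply mul_lt_mul_of_pos_right hθ.2
      positivity
    linarith
  have hg1 : g 1 = y' := by
    funext j
    show y j + 1 * (y' j - y j) = y' j
    ring
  haveI hnb : (nhdsWithin (1:ℝ) (Set.Ico (0:ℝ) 1)).NeBot := by
    apply mem_closure_iff_nhdsWithin_neBot.1
    rw [closure_Ico (by norm_num : (0:ℝ) ≠ 1)]
    exact ⟨by norm_num, le_refl 1⟩
  have hgcont : Continuous g := by
    apply continuous_pi
    intro j
    exact continuous_const.add (continuous_id.mul continuous_const)
  have ht1 : Filter.Tendsto g (nhdsWithin 1 (Set.Ico (0:ℝ) 1))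
      (nhdsWithin y' (Set.Icc 0 1)) := by
    rw [tendsto_nhdsWithin_iff]
    constructor
    · have := hgcont.tendsto 1
      rw [hg1] at this
      exact this.mono_left nhdsWithin_le_nhds
    · filter_upwards [self_mem_nhdsWithin] with θ hθ
      exact hgmem θ hθ
  have ht2 : Filter.Tendsto (fun θ => f (g θ)) (nhdsWithin 1 (Set.Ico (0:ℝ) 1))
      (nhds (f y')) := Filter.Tendsto.comp (hf y' hy') ht1
  have ht3 : Filter.Tendsto (fun θ => |f y - f (g θ)|) (nhdsWithin 1 (Set.Ico (0:ℝ) 1))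
      (nhds |f y - f y'|) := (Filter.Tendsto.sub tendsto_const_nhds ht2).abs
  apply le_of_tendsto ht3
  filter_upwards [self_mem_nhdsWithin] with θ hθ
  exact hbound θ hθ

def Qcell (d K c : ℕ) : Set (Fin d → ℝ) :=
  {y | y ∈ Set.Icc 0 1 ∧ ∀ j : Fin d, ((dig K (j:ℕ) c : ℝ))/K ≤ y j ∧ y j ≤ ((dig K (j:ℕ) c : ℝ)+1)/K}

def uaTheta (d K : ℕ) (t v : ℕ → ℝ) : ℕ → ℕ → ℕ → ℝ := fun l n m =>
  if l = 1 then (if m = d then -(t (n % (K+1))) else (1:ℝ))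
  else if l = 2 then (if m = d*(K+1) then -(d:ℝ) else
    if m % (K+1) = dig K (m/(K+1)) n then 1
    else if m % (K+1) = dig K (m/(K+1)) n + 1 then -1 else 0)
  else if l = 3 then v m else 0

end UA
open UA
/-- Universal approximation by Step networks under `F_p`: for continuous
`f* : [0,1]^d → ℝ` and `ε > 0`, with `K = min{k ∈ ℕ : 1/ω_{f*}⁻¹(ε) ≤ k}`,
there is a 3-layer Step network over `F_p` with at most `(6d+2)·K^d`
parameters satisfying `|f(x) - f*(x)| ≤ |f*(x) - ⟦f*(x)⟧| + ε` for all
`x ∈ [0,1]^d ∩ F_p^d`. -/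
theorem universal_approx_step_Fp (p d : ℕ) (hd : d ≤ 2 ^ p)
    (f : (Fin d → ℝ) → ℝ) (hf : ContinuousOn f (Set.Icc 0 1))
    (ε : ℝ) (hε : 0 < ε) (K : ℕ)
    (hK : IsLeast {k : ℕ | 1 ≤ k ∧ 1 / invMod d f ε ≤ (k : ℝ)} K)
    (rnd : ℝ → ℝ) (hrnd : ∀ r, RoundsTo p r (rnd r)) :
    ∃ (A : Arch d) (θ : ℕ → ℕ → ℕ → ℝ), A.L = 3 ∧
      A.nParams ≤ (6 * d + 2) * K ^ d ∧ (∀ l i j, θ l i j ∈ Fp p) ∧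
      ∀ x : Fin d → ℝ, x ∈ Set.Icc 0 1 → (∀ j, x j ∈ Fp p) →
        |evalNet A stepAct rnd θ (fun j => if h : j < d then x ⟨j, h⟩ else 0)
            - f x| ≤ |f x - rnd (f x)| + ε := by
  classical
  have hrnd' : ∀ r, UA.RoundsTo' p r (rnd r) := fun r => ⟨(hrnd r).1, (hrnd r).2.1⟩
  have hK1 : 1 ≤ K := hK.1.1
  have hKpos : 0 < K := hK1
  have hKR : (0:ℝ) < (K:ℝ) := by exact_mod_cast hKpos
  -- thresholds
  have htex : ∀ k : ℕ, ∃ t, t ∈ Fp p ∧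
      (0 < k → k < K → ((k:ℝ)/K ≤ t ∧ ∀ z ∈ Fp p, (k:ℝ)/K ≤ z → t ≤ z)) ∧
      (K ≤ k → t = 2) ∧ (k = 0 → t = 0) := by
    intro k
    rcases Nat.eq_zero_or_pos k with rfl | hk
    · exact ⟨0, zero_mem, fun h => absurd h (lt_irrefl 0), fun h => absurd h (by omega),
        fun _ => rfl⟩
    · rcases lt_or_ge k K with hkK | hkK
      · obtain ⟨t, h1, h2, -, h4⟩ := leastFp (p := p)
          (div_pos (show (0:ℝ) < (k:ℝ) by exact_mod_cast hk) hKR)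
        exact ⟨t, h1, fun _ _ => ⟨h2, h4⟩, fun h => absurd h (by omega),
          fun h => absurd h (by omega)⟩
      · exact ⟨2, two_mem, fun _ h => absurd h (by omega), fun _ => rfl,
          fun h => absurd h (by omega)⟩
  choose tf htfF htfmid htfK htf0 using htex
  have htnonneg : ∀ k, 0 ≤ tf k := by
    intro k
    rcases Nat.eq_zero_or_pos k with rfl | hk
    · rw [htf0 0 rfl]
    · rcases lt_or_ge k K with hkK | hkK
      · exact le_trans (by positivity) (htfmid k hk hkK).1
      · rw [htfK k hkK]; norm_num
  have htle1 : ∀ k, k < K → tf k ≤ 1 := by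
    intro k hkK
    rcases Nat.eq_zero_or_pos k with rfl | hk
    · rw [htf0 0 rfl]; norm_num
    · exact (htfmid k hk hkK).2 1 one_mem (by rw [div_le_one hKR]; exact_mod_cast hkK.le)
  have htmono : ∀ k k', k ≤ k' → tf k ≤ tf k' := by
    intro k k' hkk
    rcases lt_or_ge k' K with hk'K | hk'K
    · rcases Nat.eq_zero_or_pos k with rfl | hk
      · rw [htf0 0 rfl]; exact htnonneg k'
      · have hkK : k < K := lt_of_le_of_lt hkk hk'K
        refine (htfmid k hk hkK).2 (tf k') (htfF k') (le_trans ?_ (htfmid k' (by omega) hk'K).1)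
        gcongr
    · rw [htfK k' hk'K]
      rcases lt_or_ge k K with hkK | hkK
      · linarith [htle1 k hkK]
      · rw [htfK k hkK]
  -- output weights
  set v : ℕ → ℝ := fun c =>
    rnd ((sInf (f '' Qcell d K c) + sSup (f '' Qcell d K c))/2) with hv
  refine ⟨uaArch d K hKpos, uaTheta d K tf v, rfl, uaArch_nParams hKpos, ?_, ?_⟩
  · -- parameters in Fp
    intro l n m
    show uaTheta d K tf v l n m ∈ Fp p
    simp only [uaTheta]
    split_ifs
    · exact neg_mem (htfF _)
    · exact one_mem
    · rcases Nat.eq_zero_or_pos d with rfl | hdpos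
      · norm_num; exact zero_mem
      · refine neg_mem (nat_mem hdpos (le_trans hd ?_))
        exact Nat.pow_le_pow_right (by norm_num) (by omega)
    · exact one_mem
    · exact neg_mem one_mem
    · exact zero_mem
    · rw [hv]; exact rnd_mem hrnd' _
    · exact zero_mem
  · -- approximation bound
    intro x hx hxF
    set A := uaArch d K hKpos with hA
    set θ := uaTheta d K tf v with hθ
    set xt : ℕ → ℝ := fun j => if h : j < d then x ⟨j, h⟩ else 0 with hxt
    have hxtd : ∀ (j:ℕ) (hj : j < d), xt j = x ⟨j, hj⟩ := fun j hj => dif_pos hj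
    have hxtF : ∀ (j:ℕ), j < d → xt j ∈ Fp p := fun j hj => by
      rw [hxtd j hj]; exact hxF _
    have hxt0 : ∀ (j:ℕ), j < d → 0 ≤ xt j := fun j hj => by
      rw [hxtd j hj]; exact hx.1 _
    have hxt1 : ∀ (j:ℕ), j < d → xt j ≤ 1 := fun j hj => by
      rw [hxtd j hj]; exact hx.2 _
    set δf : ℕ → ℕ := fun j => min (⌊xt j * K⌋₊) (K-1) with hδf
    have hδlt : ∀ j, δf j < K := fun j =>
      lt_of_le_of_lt (min_le_right _ _) (by omega)
    set cs : ℕ := ∑ j ∈ Finset.range d, δf j * K ^ j with hcs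
    have hcslt : cs < K ^ d := sum_digits_lt hKpos d δf (fun j _ => hδlt j)
    have hdigcs : ∀ j, j < d → dig K j cs = δf j := dig_sum hKpos d δf (fun j _ => hδlt j)
    have hlow : ∀ j, j < d → (δf j : ℝ)/K ≤ xt j := by
      intro j hj
      rw [div_le_iff₀ hKR]
      have h1 : (δf j : ℝ) ≤ (⌊xt j * K⌋₊ : ℝ) := by exact_mod_cast min_le_left _ _
      have h2 : ((⌊xt j * K⌋₊ : ℕ) : ℝ) ≤ xt j * K :=
        Nat.floor_le (mul_nonneg (hxt0 j hj) hKR.le)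
      linarith
    have hhigh : ∀ j, j < d → xt j ≤ ((δf j : ℝ)+1)/K := by
      intro j hj
      rw [le_div_iff₀ hKR]
      rcases le_or_gt (⌊xt j * K⌋₊) (K-1) with hm | hm
      · have hEq : δf j = ⌊xt j * K⌋₊ := min_eq_left hm
        rw [hEq]
        have := Nat.lt_floor_add_one (xt j * K)
        linarith
      · have hEq : δf j = K-1 := min_eq_right (by omega)
        rw [hEq]
        have hcast : ((K-1:ℕ):ℝ) + 1 = (K:ℝ) := by
          rw [Nat.cast_sub hK1]; push_cast; ring
        rw [hcast]
        calc xt j * K ≤ 1 * K := mul_le_mul_of_nonneg_right (hxt1 j hj) hKR.le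
          _ = (K:ℝ) := one_mul _
    have htlow : ∀ j, j < d → tf (δf j) ≤ xt j := by
      intro j hj
      rcases Nat.eq_zero_or_pos (δf j) with h0 | hpos
      · rw [h0, htf0 0 rfl]; exact hxt0 j hj
      · exact (htfmid _ hpos (hδlt j)).2 (xt j) (hxtF j hj) (hlow j hj)
    have hthigh : ∀ j, j < d → ¬ (tf (δf j + 1) ≤ xt j) := by
      intro j hj
      rcases eq_or_lt_of_le (show δf j + 1 ≤ K by have := hδlt j; omega) with heq | hlt
      · rw [heq, htfK K le_rfl]
        intro hcon
        linarith [hxt1 j hj]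
      · have hfl : δf j = ⌊xt j * K⌋₊ := by
          rcases le_or_gt (⌊xt j * K⌋₊) (K-1) with hm | hm
          · exact min_eq_left hm
          · exfalso
            have : δf j = K-1 := min_eq_right (by omega)
            omega
        have h1 : ((δf j + 1 : ℕ):ℝ)/K ≤ tf (δf j + 1) := (htfmid _ (by omega) hlt).1
        have h2 : xt j * K < (⌊xt j * K⌋₊ : ℝ) + 1 := Nat.lt_floor_add_one (xt j * K)
        intro hcon
        have hcast : ((δf j + 1 : ℕ):ℝ) = (δf j : ℝ) + 1 := by push_cast; ring
        rw [hcast] at h1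
        have h3 : xt j < ((δf j:ℝ)+1)/K := by
          rw [lt_div_iff₀ hKR, hfl]
          push_cast
          linarith
        linarith
    -- power bound facts
    have h2p1 : ((d:ℤ)) ≤ 2^p := by exact_mod_cast hd
    have h2pp : (2:ℤ)^p ≤ 2^(p+1) := by
      have h0 : (0:ℤ) < 2^p := by positivity
      rw [pow_succ]
      omega
    have hone2p : (1:ℤ) ≤ 2^(p+1) := by
      have h0 : (0:ℤ) < 2^(p+1) := by positivity
      omega
    -- layer unfolding equations
    have hP0 : ∀ m, postAct A stepAct rnd θ xt 0 m = if m = d then 1 else xt m :=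
      fun m => rfl
    have hpa1 : ∀ n, postAct A stepAct rnd θ xt 1 n =
        if n = d*(K+1) then 1 else rnd (stepAct (fpAff rnd (θ 1 n)
          (postAct A stepAct rnd θ xt 0) ((A.idx 1 n).sort (· ≤ ·)))) := fun n => rfl
    have hpa2 : ∀ n, postAct A stepAct rnd θ xt 2 n =
        if n = K^d then 1 else rnd (stepAct (fpAff rnd (θ 2 n)
          (postAct A stepAct rnd θ xt 1) ((A.idx 2 n).sort (· ≤ ·)))) := fun n => rfl
    -- layer 1 values
    have hP1 : ∀ (j k : ℕ), j < d → k ≤ K →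
        postAct A stepAct rnd θ xt 1 (j*(K+1)+k) = (if tf k ≤ xt j then 1 else 0) := by
      intro j k hj hk
      have hjd : (j+1)*(K+1) ≤ d*(K+1) := Nat.mul_le_mul_right _ (by omega)
      have hring : (j+1)*(K+1) = j*(K+1) + (K+1) := by ring
      have hn : j*(K+1)+k < d*(K+1) := by omega
      have hne : j*(K+1)+k ≠ d*(K+1) := by omega
      have hidx : A.idx 1 (j*(K+1)+k) = ({(j*(K+1)+k)/(K+1), d} : Finset ℕ) := by
        show uaIdx d K 1 _ = _
        rw [uaIdx, if_pos ⟨rfl, hn⟩]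
      have hdiv : (j*(K+1)+k)/(K+1) = j := by
        rw [show j*(K+1)+k = (K+1)*j + k by ring, Nat.mul_add_div (by omega),
          Nat.div_eq_of_lt (by omega)]
        omega
      have hmod : (j*(K+1)+k) % (K+1) = k := by
        rw [show j*(K+1)+k = (K+1)*j + k by ring, Nat.mul_add_mod, Nat.mod_eq_of_lt (by omega)]
      rw [hpa1, if_neg hne, hidx, hdiv, sort_pair hj]
      rw [show fpAff rnd (θ 1 (j*(K+1)+k)) (postAct A stepAct rnd θ xt 0) [j, d]
        = rnd (rnd (0 + rnd (θ 1 (j*(K+1)+k) j * postAct A stepAct rnd θ xt 0 j))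
            + rnd (θ 1 (j*(K+1)+k) d * postAct A stepAct rnd θ xt 0 d)) from rfl]
      have hw1 : θ 1 (j*(K+1)+k) j = 1 := by
        rw [hθ]
        show (if j = d then -(tf ((j*(K+1)+k) % (K+1))) else (1:ℝ)) = 1
        rw [if_neg (by omega : ¬ j = d)]
      have hw2 : θ 1 (j*(K+1)+k) d = -(tf k) := by
        rw [hθ]
        show (if d = d then -(tf ((j*(K+1)+k) % (K+1))) else (1:ℝ)) = -(tf k)
        rw [if_pos rfl, hmod]
      have hv1 : postAct A stepAct rnd θ xt 0 j = xt j := by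
        rw [hP0 j, if_neg (by omega : ¬ j = d)]
      have hv2 : postAct A stepAct rnd θ xt 0 d = 1 := by rw [hP0 d, if_pos rfl]
      rw [hw1, hv1, hw2, hv2, one_mul, mul_one]
      rw [rnd_fix hrnd' (hxtF j hj), zero_add, rnd_fix hrnd' (hxtF j hj),
        rnd_fix hrnd' (neg_mem (htfF k))]
      have hs : stepAct (rnd (xt j + -tf k)) = if tf k ≤ xt j then 1 else 0 := by
        simp only [stepAct]
        refine if_congr ?_ rfl rfl
        rw [rnd_nonneg_iff hrnd']
        constructor <;> intro <;> linarith
      rw [hs]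
      split_ifs
      · exact rnd_fix hrnd' one_mem
      · exact rnd_fix hrnd' zero_mem
    -- layer 2 values
    set LI : ℕ → ℕ → ℤ := fun c j => if tf (dig K j c) ≤ xt j then 1 else 0 with hLI
    set HI : ℕ → ℕ → ℤ := fun c j => if tf (dig K j c + 1) ≤ xt j then 1 else 0 with hHI
    have h01 : ∀ c j, (0 ≤ LI c j ∧ LI c j ≤ 1) ∧ (0 ≤ HI c j ∧ HI c j ≤ 1) := by
      intro c j
      rw [hLI, hHI]
      dsimp only
      constructor <;> split_ifs <;> omega
    have hP2 : ∀ c, c < K^d →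
        postAct A stepAct rnd θ xt 2 c = if c = cs then 1 else 0 := by
      intro c hc
      have hfold : ∀ m, m ≤ d →
          List.foldl (fun a i => rnd (a + rnd (θ 2 c i * postAct A stepAct rnd θ xt 1 i)))
            0 (body m K c)
          = ((∑ j ∈ Finset.range m, (LI c j - HI c j) : ℤ) : ℝ) := by
        intro m
        induction m with
        | zero => intro _; simp [body]
        | succ m ih =>
          intro hm
          have hmd : m < d := hm
          have hjd : (m+1)*(K+1) ≤ d*(K+1) := Nat.mul_le_mul_right _ (by omega)
          have hring : (m+1)*(K+1) = m*(K+1) + (K+1) := by ring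
          have hdigK := dig_lt hKpos m c
          have hn1lt : m*(K+1) + dig K m c < d*(K+1) := by omega
          have hn2lt : m*(K+1) + dig K m c + 1 < d*(K+1) := by omega
          rw [body_succ, List.foldl_append, ih (by omega)]
          simp only [blockL]
          rw [List.foldl_cons, List.foldl_cons, List.foldl_nil]
          -- index arithmetic
          have hdiv1 : (m*(K+1) + dig K m c)/(K+1) = m := by
            rw [show m*(K+1) + dig K m c = (K+1)*m + dig K m c by ring,
              Nat.mul_add_div (by omega), Nat.div_eq_of_lt (by omega)]
            omega
          have hmod1 : (m*(K+1) + dig K m c) % (K+1) = dig K m c := by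
            rw [show m*(K+1) + dig K m c = (K+1)*m + dig K m c by ring,
              Nat.mul_add_mod, Nat.mod_eq_of_lt (by omega)]
          have hdiv2 : (m*(K+1) + dig K m c + 1)/(K+1) = m := by
            rw [show m*(K+1) + dig K m c + 1 = (K+1)*m + (dig K m c + 1) by ring,
              Nat.mul_add_div (by omega), Nat.div_eq_of_lt (by omega)]
            omega
          have hmod2 : (m*(K+1) + dig K m c + 1) % (K+1) = dig K m c + 1 := by
            rw [show m*(K+1) + dig K m c + 1 = (K+1)*m + (dig K m c + 1) by ring,
              Nat.mul_add_mod, Nat.mod_eq_of_lt (by omega)]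
          have hθ1 : θ 2 c (m*(K+1) + dig K m c) = 1 := by
            rw [hθ]
            show (if m*(K+1) + dig K m c = d*(K+1) then -(d:ℝ) else
              if (m*(K+1) + dig K m c) % (K+1)
                  = dig K ((m*(K+1) + dig K m c)/(K+1)) c then 1
              else if (m*(K+1) + dig K m c) % (K+1)
                  = dig K ((m*(K+1) + dig K m c)/(K+1)) c + 1 then -1 else 0) = 1
            rw [if_neg (by omega), hdiv1, hmod1, if_pos rfl]
          have hθ2 : θ 2 c (m*(K+1) + dig K m c + 1) = -1 := by
            rw [hθ]
            show (if m*(K+1) + dig K m c + 1 = d*(K+1) then -(d:ℝ) else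
              if (m*(K+1) + dig K m c + 1) % (K+1)
                  = dig K ((m*(K+1) + dig K m c + 1)/(K+1)) c then 1
              else if (m*(K+1) + dig K m c + 1) % (K+1)
                  = dig K ((m*(K+1) + dig K m c + 1)/(K+1)) c + 1 then -1 else 0) = -1
            rw [if_neg (by omega), hdiv2, hmod2, if_neg (by omega), if_pos rfl]
          have hpv1 : postAct A stepAct rnd θ xt 1 (m*(K+1) + dig K m c)
              = ((LI c m : ℤ) : ℝ) := by
            rw [hP1 m (dig K m c) hmd (by omega), hLI]
            dsimp only
            split_ifs <;> simp
          have hpv2 : postAct A stepAct rnd θ xt 1 (m*(K+1) + dig K m c + 1)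
              = ((HI c m : ℤ) : ℝ) := by
            rw [show m*(K+1) + dig K m c + 1 = m*(K+1) + (dig K m c + 1) from rfl,
              hP1 m (dig K m c + 1) hmd (by omega), hHI]
            dsimp only
            split_ifs <;> simp
          rw [hθ1, hθ2, hpv1, hpv2, one_mul, neg_one_mul]
          have hLb := h01 c m
          have hSb1 : |∑ j ∈ Finset.range m, (LI c j - HI c j)| ≤ (m:ℤ) := by
            calc |∑ j ∈ Finset.range m, (LI c j - HI c j)|
                ≤ ∑ j ∈ Finset.range m, |LI c j - HI c j| := Finset.abs_sum_le_sum_abs _ _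
              _ ≤ ∑ _j ∈ Finset.range m, 1 := Finset.sum_le_sum (fun j _ => by
                  have := h01 c j
                  rw [abs_le]
                  omega)
              _ = (m:ℤ) := by simp
          rw [rnd_int hrnd' (by rw [abs_le]; omega : |LI c m| ≤ 2^(p+1))]
          rw [show ((∑ j ∈ Finset.range m, (LI c j - HI c j) : ℤ) : ℝ) + (LI c m : ℝ)
            = (((∑ j ∈ Finset.range m, (LI c j - HI c j)) + LI c m : ℤ) : ℝ) by push_cast; ring]
          rw [rnd_int hrnd' (by rw [abs_le] at hSb1 ⊢; omega)]
          rw [show -((HI c m : ℤ) : ℝ) = (((-(HI c m)) : ℤ) : ℝ) by push_cast; ring]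
          rw [rnd_int hrnd' (by rw [abs_le]; omega : |(-(HI c m))| ≤ 2^(p+1))]
          rw [show (((∑ j ∈ Finset.range m, (LI c j - HI c j)) + LI c m : ℤ) : ℝ)
              + ((-(HI c m) : ℤ) : ℝ)
            = (((∑ j ∈ Finset.range m, (LI c j - HI c j)) + LI c m - HI c m : ℤ) : ℝ) by
              push_cast; ring]
          rw [rnd_int hrnd' (by rw [abs_le] at hSb1 ⊢; omega)]
          rw [Finset.sum_range_succ]
          push_cast
          ring
      -- assemble layer 2
      have hidx2 : A.idx 2 c = (L2list d K c).toFinset := by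
        show uaIdx d K 2 c = _
        rw [uaIdx, if_neg (by omega), if_pos ⟨rfl, hc⟩]
      have hsort2 : (A.idx 2 c).sort (· ≤ ·) = L2list d K c := by
        rw [hidx2]; exact L2_sort hKpos d c
      have hcne : c ≠ K^d := by omega
      rw [hpa2, if_neg hcne, hsort2]
      show rnd (stepAct (List.foldl
        (fun a i => rnd (a + rnd (θ 2 c i * postAct A stepAct rnd θ xt 1 i)))
        0 (body d K c ++ [d*(K+1)]))) = _
      rw [List.foldl_append, hfold d le_rfl, List.foldl_cons, List.foldl_nil]
      have hθb : θ 2 c (d*(K+1)) = -(d:ℝ) := by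
        rw [hθ]
        show (if d*(K+1) = d*(K+1) then -(d:ℝ) else
          if (d*(K+1)) % (K+1) = dig K ((d*(K+1))/(K+1)) c then 1
          else if (d*(K+1)) % (K+1) = dig K ((d*(K+1))/(K+1)) c + 1 then -1 else 0)
          = -(d:ℝ)
        rw [if_pos rfl]
      have hpb : postAct A stepAct rnd θ xt 1 (d*(K+1)) = 1 := by
        rw [hpa1, if_pos rfl]
      rw [hθb, hpb, mul_one]
      have hSb : |∑ j ∈ Finset.range d, (LI c j - HI c j)| ≤ (d:ℤ) := by
        calc |∑ j ∈ Finset.range d, (LI c j - HI c j)|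
            ≤ ∑ j ∈ Finset.range d, |LI c j - HI c j| := Finset.abs_sum_le_sum_abs _ _
          _ ≤ ∑ _j ∈ Finset.range d, 1 := Finset.sum_le_sum (fun j _ => by
              have := h01 c j
              rw [abs_le]
              omega)
          _ = (d:ℤ) := by simp
      rw [show -(d:ℝ) = ((-(d:ℤ) : ℤ) : ℝ) by push_cast; ring]
      rw [rnd_int hrnd' (by rw [abs_le]; omega : |(-(d:ℤ))| ≤ 2^(p+1))]
      rw [show ((∑ j ∈ Finset.range d, (LI c j - HI c j) : ℤ) : ℝ) + ((-(d:ℤ) : ℤ) : ℝ)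
        = (((∑ j ∈ Finset.range d, (LI c j - HI c j)) - d : ℤ) : ℝ) by push_cast; ring]
      rw [rnd_int hrnd' (by rw [abs_le] at hSb ⊢; constructor <;> omega)]
      set S : ℤ := ∑ j ∈ Finset.range d, (LI c j - HI c j) with hS
      have hstepv : stepAct ((S - d : ℤ) : ℝ) = if (d:ℤ) ≤ S then 1 else 0 := by
        simp only [stepAct]
        refine if_congr ?_ rfl rfl
        constructor
        · intro h
          have : (0:ℤ) ≤ S - d := by exact_mod_cast h
          omega
        · intro h
          have h' : (0:ℤ) ≤ S - d := by omega
          exact_mod_cast h'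
      rw [hstepv]
      -- characterize firing
      have hSd : ((d:ℤ) ≤ S) ↔ (∀ j, j < d → dig K j c = δf j) := by
        constructor
        · intro hge
          have hzero : ∑ j ∈ Finset.range d, (1 - (LI c j - HI c j)) = 0 := by
            have h1 : ∑ j ∈ Finset.range d, (1 - (LI c j - HI c j)) = (d:ℤ) - S := by
              rw [Finset.sum_sub_distrib, Finset.sum_const, Finset.card_range, hS]
              push_cast
              ring
            have h2 : (0:ℤ) ≤ ∑ j ∈ Finset.range d, (1 - (LI c j - HI c j)) :=
              Finset.sum_nonneg (fun j _ => by have := h01 c j; omega)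
            omega
          have hall := (Finset.sum_eq_zero_iff_of_nonneg
            (fun j _ => by have := h01 c j; omega : ∀ j ∈ Finset.range d,
              (0:ℤ) ≤ 1 - (LI c j - HI c j))).1 hzero
          intro j hj
          have hj' := hall j (Finset.mem_range.2 hj)
          have hLH := h01 c j
          have hLi1 : LI c j = 1 := by omega
          have hHi0 : HI c j = 0 := by omega
          have ht1 : tf (dig K j c) ≤ xt j := by
            by_contra hcon
            rw [hLI] at hLi1
            dsimp only at hLi1
            rw [if_neg hcon] at hLi1
            omega
          have ht2 : ¬ (tf (dig K j c + 1) ≤ xt j) := by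
            intro hcon
            rw [hHI] at hHi0
            dsimp only at hHi0
            rw [if_pos hcon] at hHi0
            omega
          by_contra hne
          rcases lt_or_gt_of_ne hne with hltd | hgtd
          · exact ht2 (le_trans (htmono _ _ (by omega)) (htlow j hj))
          · exact (hthigh j hj) (le_trans (htmono _ _ (by omega)) ht1)
        · intro hdig
          have hall : ∀ j ∈ Finset.range d, LI c j - HI c j = 1 := by
            intro j hjm
            rw [Finset.mem_range] at hjm
            have hLi1 : LI c j = 1 := by
              rw [hLI]
              dsimp only
              rw [if_pos (by rw [hdig j hjm]; exact htlow j hjm)]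
            have hHi0 : HI c j = 0 := by
              rw [hHI]
              dsimp only
              rw [if_neg (by rw [hdig j hjm]; exact hthigh j hjm)]
            omega
          rw [hS, Finset.sum_congr rfl hall, Finset.sum_const, Finset.card_range]
          simp
      have hdigiff : (∀ j, j < d → dig K j c = δf j) ↔ c = cs := by
        constructor
        · intro hdg
          rw [hcs, ← sum_dig hKpos d c hc]
          exact Finset.sum_congr rfl (fun j hjm => by
            rw [hdg j (Finset.mem_range.1 hjm)])
        · intro h
          rw [h]
          exact hdigcs
      have hEq : (if (d:ℤ) ≤ S then (1:ℝ) else 0) = if c = cs then 1 else 0 := by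
        by_cases hc2 : c = cs
        · rw [if_pos (hSd.2 (hdigiff.2 hc2)), if_pos hc2]
        · rw [if_neg (fun h => hc2 (hdigiff.1 (hSd.1 h))), if_neg hc2]
      rw [hEq]
      split_ifs
      · exact rnd_fix hrnd' one_mem
      · exact rnd_fix hrnd' zero_mem
    -- layer 3: output
    have hzrnd : rnd 0 = 0 := rnd_zero hrnd'
    have hterm0 : ∀ c', c' < K^d → c' ≠ cs →
        rnd (θ 3 0 c' * postAct A stepAct rnd θ xt 2 c') = 0 := by
      intro c' h1 h2
      rw [hP2 c' h1, if_neg h2, mul_zero, hzrnd]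
    have hidx3 : A.idx 3 0 = Finset.range (K^d) := by
      show uaIdx d K 3 0 = _
      rw [uaIdx, if_neg (by omega), if_neg (by omega), if_pos ⟨rfl, rfl⟩]
    have hsort3 : (A.idx 3 0).sort (· ≤ ·) = List.range (K^d) := by
      rw [hidx3]; exact Finset.sort_range _
    have hsplit : List.range (K^d) = (List.range cs ++ [cs])
        ++ List.map (fun i => cs + 1 + i) (List.range (K^d - cs - 1)) := by
      rw [← List.range_succ, ← List.range_add]
      congr 1
      omega
    have hvmem : v cs ∈ Fp p := by rw [hv]; exact rnd_mem hrnd' _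
    have hw3 : θ 3 0 cs = v cs := by rw [hθ]; rfl
    have heval : evalNet A stepAct rnd θ xt = v cs := by
      show fpAff rnd (θ 3 0) (postAct A stepAct rnd θ xt 2)
        ((A.idx 3 0).sort (· ≤ ·)) = v cs
      rw [hsort3, hsplit]
      simp only [fpAff]
      rw [List.foldl_append, List.foldl_append]
      rw [foldl_zero (List.range cs) 0 hzrnd (fun c' hc' => by
        rw [List.mem_range] at hc'
        exact hterm0 c' (by omega) (by omega))]
      rw [List.foldl_cons, List.foldl_nil]
      rw [hw3, hP2 cs hcslt, if_pos rfl, mul_one, rnd_fix hrnd' hvmem, zero_add,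
        rnd_fix hrnd' hvmem]
      rw [foldl_zero _ (v cs) (rnd_fix hrnd' hvmem) (fun c' hc' => by
        rw [List.mem_map] at hc'
        obtain ⟨i, hi, rfl⟩ := hc'
        rw [List.mem_range] at hi
        exact hterm0 _ (by omega) (by omega))]
    rw [heval]
    -- final estimate
    have hxQ : x ∈ Qcell d K cs := by
      refine ⟨hx, fun j => ?_⟩
      rw [hdigcs (j:ℕ) j.2]
      constructor
      · have := hlow (j:ℕ) j.2
        rwa [hxtd (j:ℕ) j.2, Fin.eta] at this
      · have := hhigh (j:ℕ) j.2
        rwa [hxtd (j:ℕ) j.2, Fin.eta] at this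
    have hQsub : Qcell d K cs ⊆ Set.Icc 0 1 := fun y hy => hy.1
    obtain ⟨C, hCb⟩ := (isCompact_Icc (a := (0 : Fin d → ℝ)) (b := 1)).exists_bound_of_continuousOn hf
    have hfxS : f x ∈ f '' Qcell d K cs := ⟨x, hxQ, rfl⟩
    have hSne : (f '' Qcell d K cs).Nonempty := ⟨f x, hfxS⟩
    have hbddA : BddAbove (f '' Qcell d K cs) := by
      refine ⟨C, ?_⟩
      rintro a ⟨y, hy, rfl⟩
      have := hCb y (hQsub hy)
      rw [Real.norm_eq_abs] at this
      exact (abs_le.1 this).2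
    have hbddB : BddBelow (f '' Qcell d K cs) := by
      refine ⟨-C, ?_⟩
      rintro a ⟨y, hy, rfl⟩
      have := hCb y (hQsub hy)
      rw [Real.norm_eq_abs] at this
      exact (abs_le.1 this).1
    have hCC := claimC hf hε hK1 hK.1.2
    have hpair : ∀ a ∈ f '' Qcell d K cs, ∀ b ∈ f '' Qcell d K cs, a - b ≤ ε := by
      rintro a ⟨y, hy, rfl⟩ b ⟨y', hy', rfl⟩
      have hco : ∀ j, |y j - y' j| ≤ 1/(K:ℝ) := by
        intro j
        have h1 := hy.2 j
        have h2 := hy'.2 j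
        have hEq : ((dig K (j:ℕ) cs : ℝ)+1)/K - (dig K (j:ℕ) cs : ℝ)/K = 1/(K:ℝ) := by
          ring
        rw [abs_le]
        constructor <;> linarith [h1.1, h1.2, h2.1, h2.2]
      have habs := hCC y y' (hQsub hy) (hQsub hy') hco
      linarith [(abs_le.1 habs).2]
    set m : ℝ := sInf (f '' Qcell d K cs) with hm
    set M : ℝ := sSup (f '' Qcell d K cs) with hM
    have h1 : m ≤ f x := csInf_le hbddB hfxS
    have h2 : f x ≤ M := le_csSup hbddA hfxS
    have h3 : M ≤ m + ε := by
      apply csSup_le hSne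
      intro a ha
      have : a - ε ≤ m := le_csInf hSne (fun b hb => by linarith [hpair a ha b hb])
      linarith
    have hμ : |(m + M)/2 - f x| ≤ ε/2 := by
      rw [abs_le]
      constructor <;> linarith
    have hveq : v cs = rnd ((m + M)/2) := by rw [hv]
    have hmin : |(m + M)/2 - rnd ((m + M)/2)| ≤ |(m + M)/2 - rnd (f x)| :=
      (hrnd ((m + M)/2)).2.1 _ ((hrnd (f x)).1)
    have htri1 : |(m + M)/2 - rnd (f x)| ≤ |(m + M)/2 - f x| + |f x - rnd (f x)| :=
      abs_sub_le _ _ _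
    have htri2 : |v cs - f x| ≤ |v cs - (m + M)/2| + |(m + M)/2 - f x| := abs_sub_le _ _ _
    have hcomm : |v cs - (m + M)/2| = |(m + M)/2 - rnd ((m + M)/2)| := by
      rw [hveq, abs_sub_comm]
    linarith
end
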